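/- Let V be a 4-dimensional real inner product space with compatible complex structure J, and let W be the space of trilinear forms α with α(x,y,z) = −α(x,z,y) = −α(x,Jy,Jz). If α ∈ W satisfies α(x,y,z) = α(Jx,Jy,z) for all x,y,z and its trace form ᾱ(z) = Σᵢ α(eᵢ,eᵢ,z) vanishes for every z (with {eᵢ} an orthonormal basis), then α = 0; i.e., the Gray–Hervella class W₃ is trivial in dimension 4. -/

import Mathlib

set_option maxHeartbeats 1000000


/-- Membership in the Gray–Hervella space `W`. -/
def GrayHervella.memW {V : Type*} [NormedAddCommGroup V] [InnerProductSpace ℝ V]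
    (J : V →ₗ[ℝ] V) (α : V →ₗ[ℝ] V →ₗ[ℝ] V →ₗ[ℝ] ℝ) : Prop :=
  ∀ x y z : V, α x y z = - α x z y ∧ α x y z = - α x (J y) (J z)

/-- On a 4-dimensional real inner ℝ product space with compatible complex
structure `J`, if `α ∈ W` satisfies `α(x,y,z) = α(Jx,Jy,z)` and its trace form
`ᾱ(z) = Σᵢ α(eᵢ,eᵢ,z)` vanishes for every `z`, then `α = 0`; i.e. the Gray–Hervella
class `W₃` is trivial in dimension 4. -/
theorem W3_trivial_dim_four
    {V : Type*} [NormedAddCommGroup V] [InnerProductSpace ℝ V] [FiniteDimensional ℝ V]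
    (b : OrthonormalBasis (Fin 4) ℝ V)
    (J : V →ₗ[ℝ] V) (hJ2 : ∀ x : V, J (J x) = -x)
    (hJinner : ∀ x y : V, (inner ℝ (J x) (J y) : ℝ) = inner ℝ x y)
    (α : V →ₗ[ℝ] V →ₗ[ℝ] V →ₗ[ℝ] ℝ) (hα : GrayHervella.memW J α)
    (hJJ : ∀ x y z : V, α x y z = α (J x) (J y) z)
    (htrace : ∀ z : V, ∑ i : Fin 4, α (b i) (b i) z = 0) :
    α = 0 := by
  classical
  have hdim : Module.finrank ℝ V = 4 := by
    rw [Module.finrank_eq_card_basis b.toBasis, Fintype.card_fin]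
  -- basic facts about J
  have hJ0 : ∀ x : V, (inner ℝ (J x) x : ℝ) = 0 := by
    intro x
    have h1 : (inner ℝ (J (J x)) (J x) : ℝ) = inner ℝ (J x) x := hJinner (J x) x
    rw [hJ2 x, inner_neg_left] at h1
    have h2 : (inner ℝ x (J x) : ℝ) = inner ℝ (J x) x := real_inner_comm _ _
    linarith
  -- the first basis vector
  set v1 : V := b 0 with hv1
  have hv1norm : ‖v1‖ = 1 := b.orthonormal.1 0
  -- a unit vector orthogonal to v1 and J v1
  obtain ⟨v3, hv3norm, h13, h23⟩ :
      ∃ v3 : V, ‖v3‖ = 1 ∧ (inner ℝ v1 v3 : ℝ) = 0 ∧ (inner ℝ (J v1) v3 : ℝ) = 0 := by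
    set S : Submodule ℝ V := Submodule.span ℝ (↑({v1, J v1} : Finset V)) with hS
    have hSle : Module.finrank ℝ S ≤ 2 := by
      refine (finrank_span_finset_le_card _).trans ?_
      exact (Finset.card_insert_le _ _).trans (by simp)
    have horth : Sᗮ ≠ ⊥ := by
      intro h
      have h2 : Module.finrank ℝ (Sᗮ) = 0 := by rw [h]; simp
      have h3 := Submodule.finrank_add_finrank_orthogonal S
      rw [h2, hdim] at h3
      omega
    obtain ⟨v, hvS, hv0⟩ := Submodule.ne_bot_iff _ |>.mp horth
    refine ⟨‖v‖⁻¹ • v, ?_, ?_, ?_⟩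
    · rw [norm_smul]
      simp [norm_ne_zero_iff.mpr hv0]
    · rw [real_inner_smul_right]
      have := (Submodule.mem_orthogonal _ _).mp hvS v1
        (Submodule.subset_span (by simp))
      rw [this]; ring
    · rw [real_inner_smul_right]
      have := (Submodule.mem_orthogonal _ _).mp hvS (J v1)
        (Submodule.subset_span (by simp))
      rw [this]; ring
  set v2 : V := J v1 with hv2
  set v4 : V := J v3 with hv4
  -- the adapted orthonormal basis
  set f : Fin 4 → V := ![v1, v2, v3, v4] with hf
  have hJv2 : J v2 = -v1 := by rw [hv2, hJ2]
  have hJv4 : J v4 = -v3 := by rw [hv4, hJ2]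
  have hinner11 : (inner ℝ v1 v1 : ℝ) = 1 := by
    rw [real_inner_self_eq_norm_sq, hv1norm]; norm_num
  have hinner33 : (inner ℝ v3 v3 : ℝ) = 1 := by
    rw [real_inner_self_eq_norm_sq, hv3norm]; norm_num
  have hinner22 : (inner ℝ v2 v2 : ℝ) = 1 := by rw [hv2, hJinner, hinner11]
  have hinner44 : (inner ℝ v4 v4 : ℝ) = 1 := by rw [hv4, hJinner, hinner33]
  have h12 : (inner ℝ v1 v2 : ℝ) = 0 := by
    rw [real_inner_comm]; exact hJ0 v1
  have h14 : (inner ℝ v1 v4 : ℝ) = 0 := by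
    have : (inner ℝ (J v1) (J v4) : ℝ) = inner ℝ v1 v4 := hJinner v1 v4
    rw [hJv4, inner_neg_right] at this
    rw [← hv2] at this
    linarith [h23]
  have h24 : (inner ℝ v2 v4 : ℝ) = 0 := by
    rw [hv2, hv4, hJinner]; exact h13
  have h34 : (inner ℝ v3 v4 : ℝ) = 0 := by
    rw [real_inner_comm]; exact hJ0 v3
  have h21 : (inner ℝ v2 v1 : ℝ) = 0 := by rw [real_inner_comm]; exact h12
  have h31 : (inner ℝ v3 v1 : ℝ) = 0 := by rw [real_inner_comm]; exact h13
  have h41 : (inner ℝ v4 v1 : ℝ) = 0 := by rw [real_inner_comm]; exact h14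
  have h32 : (inner ℝ v3 v2 : ℝ) = 0 := by rw [real_inner_comm]; exact h23
  have h42 : (inner ℝ v4 v2 : ℝ) = 0 := by rw [real_inner_comm]; exact h24
  have h43 : (inner ℝ v4 v3 : ℝ) = 0 := by rw [real_inner_comm]; exact h34
  have hon : Orthonormal ℝ f := by
    rw [orthonormal_iff_ite]
    intro i j
    fin_cases i <;> fin_cases j <;>
      simp [hf, hinner11, hinner22, hinner33, hinner44, h12, h13, h14, h23, h24,
        h34, h21, h31, h41, h32, h42, h43] <;>
      left <;> rw [norm_eq_sqrt_real_inner] <;>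
      simp only [hinner11, hinner22, hinner33, hinner44, Real.sqrt_one]
  have hcard : Fintype.card (Fin 4) = Module.finrank ℝ V := by simp [hdim]
  set B : Module.Basis (Fin 4) ℝ V :=
    basisOfLinearIndependentOfCardEqFinrank hon.linearIndependent hcard with hB
  have hBf : ⇑B = f := by
    rw [hB]; exact coe_basisOfLinearIndependentOfCardEqFinrank _ _
  set g : OrthonormalBasis (Fin 4) ℝ V := B.toOrthonormalBasis (by rw [hBf]; exact hon)
    with hg
  have hgf : ∀ i, g i = f i := by
    intro i
    rw [hg, Module.Basis.coe_toOrthonormalBasis, hBf]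
  -- transfer the trace condition to the adapted basis
  have htr : ∀ z : V, ∑ j : Fin 4, α (f j) (f j) z = 0 := by
    intro z
    have expand : ∀ x : V, α x x z
        = ∑ j : Fin 4, ∑ k : Fin 4,
            (inner ℝ (g j) x : ℝ) * ((inner ℝ (g k) x : ℝ) * α (g j) (g k) z) := by
      intro x
      conv_lhs => rw [← g.sum_repr x]
      simp only [map_sum, map_smul, LinearMap.sum_apply, LinearMap.smul_apply,
        smul_eq_mul, g.repr_apply_apply]
      rw [Finset.sum_comm]
      congr 1
      ext j
      rw [Finset.mul_sum]
      congr 1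
      ext k
      ring
    have key : (0 : ℝ) = ∑ j : Fin 4, α (g j) (g j) z := by
      calc (0:ℝ) = ∑ i : Fin 4, α (b i) (b i) z := (htrace z).symm
        _ = ∑ i : Fin 4, ∑ j : Fin 4, ∑ k : Fin 4,
              (inner ℝ (g j) (b i) : ℝ) * ((inner ℝ (g k) (b i) : ℝ) * α (g j) (g k) z) := by
            exact Finset.sum_congr rfl fun i _ => expand (b i)
        _ = ∑ j : Fin 4, ∑ k : Fin 4, ∑ i : Fin 4,
              (inner ℝ (g j) (b i) : ℝ) * ((inner ℝ (g k) (b i) : ℝ) * α (g j) (g k) z) := by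
            rw [Finset.sum_comm]
            exact Finset.sum_congr rfl fun j _ => Finset.sum_comm
        _ = ∑ j : Fin 4, ∑ k : Fin 4,
              (inner ℝ (g j) (g k) : ℝ) * α (g j) (g k) z := by
            refine Finset.sum_congr rfl fun j _ => Finset.sum_congr rfl fun k _ => ?_
            rw [← b.sum_inner_mul_inner (g j) (g k), Finset.sum_mul]
            refine Finset.sum_congr rfl fun i _ => ?_
            rw [real_inner_comm (b i) (g k)]
            ring
        _ = ∑ j : Fin 4, α (g j) (g j) z := by
            refine Finset.sum_congr rfl fun j _ => ?_
            rw [Fin.sum_univ_four]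
            have := orthonormal_iff_ite.mp g.orthonormal
            fin_cases j <;>
              simp [this] <;> ring_nf <;>
              simp [this 0 1, this 0 2, this 0 3, this 1 0, this 1 2, this 1 3,
                this 2 0, this 2 1, this 2 3, this 3 0, this 3 1, this 3 2]
    have : ∑ j : Fin 4, α (g j) (g j) z = ∑ j : Fin 4, α (f j) (f j) z :=
      Finset.sum_congr rfl fun j _ => by rw [hgf j]
    rw [← this]; exact key.symm
  -- symmetry lemmas
  have hA : ∀ x y z : V, α x y z = -α x z y := fun x y z => (hα x y z).1
  have diag : ∀ x y : V, α x y y = 0 := by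
    intro x y; have := hA x y y; linarith
  have hBm : ∀ x y z : V, α x (J y) (J z) = -α x y z := by
    intro x y z; have := (hα x y z).2; linarith
  have hD : ∀ x y z : V, α (J x) y z = -α x (J y) z := by
    intro x y z
    have h := hJJ (J x) y z
    rw [hJ2] at h
    rw [h]
    simp
  -- structural component identities
  have c12 : ∀ x : V, α x v1 v2 = 0 := by
    intro x
    have h := hBm x v1 v2
    rw [← hv2, hJv2] at h
    simp only [map_neg, LinearMap.neg_apply] at h
    have h2 := hA x v1 v2
    linarith
  have c34 : ∀ x : V, α x v3 v4 = 0 := by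
    intro x
    have h := hBm x v3 v4
    rw [← hv4, hJv4] at h
    simp only [map_neg, LinearMap.neg_apply] at h
    have h2 := hA x v3 v4
    linarith
  have c24 : ∀ x : V, α x v2 v4 = -α x v1 v3 := by
    intro x
    have h := hBm x v1 v3
    rw [← hv2, ← hv4] at h
    exact h
  have c23 : ∀ x : V, α x v2 v3 = α x v1 v4 := by
    intro x
    have h := hBm x v1 v4
    rw [← hv2, hJv4] at h
    simp only [map_neg] at h
    linarith
  -- p/q transformation under J in the first slot
  have pJ : ∀ x : V, α (J x) v1 v3 = -α x v1 v4 := by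
    intro x
    have h := hD x v1 v3
    rw [← hv2] at h
    rw [h, c23]
  have qJ : ∀ x : V, α (J x) v1 v4 = α x v1 v3 := by
    intro x
    have h := hD x v1 v4
    rw [← hv2] at h
    rw [h, c24]
    ring
  -- the four trace equations
  have T : ∀ z : V,
      α v1 v1 z + α v2 v2 z + α v3 v3 z + α v4 v4 z = 0 := by
    intro z
    have := htr z
    rw [Fin.sum_univ_four] at this
    simpa [hf] using this
  -- derive vanishing of all p/q components
  have hp3 : α v3 v1 v3 = 0 := by
    have t := T v1
    have e1 := diag v1 v1
    have e2 : α v2 v2 v1 = 0 := by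
      have := hA v2 v2 v1; have := c12 v2; linarith [hA v2 v2 v1, c12 v2]
    have e3 : α v3 v3 v1 = -α v3 v1 v3 := hA v3 v3 v1
    have e4 : α v4 v4 v1 = -α v3 v1 v3 := by
      have h1 := hA v4 v4 v1
      have h2 : α v4 v1 v4 = α v3 v1 v3 := by
        have := qJ v3; rw [← hv4] at this; linarith
      linarith
    linarith
  have hq3 : α v3 v1 v4 = 0 := by
    have t := T v2
    have e1 : α v1 v1 v2 = 0 := by linarith [hA v1 v1 v2, c12 v1]
    have e2 := diag v2 v2
    have e3 : α v3 v3 v2 = -α v3 v1 v4 := by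
      have h1 := hA v3 v3 v2
      have h2 := c23 v3
      linarith
    have e4 : α v4 v4 v2 = -α v3 v1 v4 := by
      have h1 := hA v4 v4 v2
      have h2 := c24 v4
      have h3 : α v4 v1 v3 = -α v3 v1 v4 := by
        have := pJ v3; rw [← hv4] at this; linarith
      linarith
    linarith
  have hp1 : α v1 v1 v3 = 0 := by
    have t := T v3
    have e2 : α v2 v2 v3 = α v1 v1 v3 := by
      have h1 := c23 v2
      have h2 : α v2 v1 v4 = α v1 v1 v3 := by
        have := qJ v1; rw [← hv2] at this; linarith
      linarith
    have e3 := diag v3 v3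
    have e4 : α v4 v4 v3 = 0 := by linarith [hA v4 v4 v3, c34 v4]
    linarith
  have hq1 : α v1 v1 v4 = 0 := by
    have t := T v4
    have e2 : α v2 v2 v4 = α v1 v1 v4 := by
      have h1 := c24 v2
      have h2 : α v2 v1 v3 = -α v1 v1 v4 := by
        have := pJ v1; rw [← hv2] at this; linarith
      linarith
    have e3 : α v3 v3 v4 = 0 := by linarith [hA v3 v3 v4, c34 v3]
    have e4 := diag v4 v4
    linarith
  have hp2 : α v2 v1 v3 = 0 := by
    have := pJ v1; rw [← hv2] at this; linarith
  have hq2 : α v2 v1 v4 = 0 := by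
    have := qJ v1; rw [← hv2] at this; linarith
  have hp4 : α v4 v1 v3 = 0 := by
    have := pJ v3; rw [← hv4] at this; linarith
  have hq4 : α v4 v1 v4 = 0 := by
    have := qJ v3; rw [← hv4] at this; linarith
  -- all components vanish
  have hall : ∀ x : V, α x v1 v3 = 0 → α x v1 v4 = 0 →
      ∀ j k : Fin 4, α x (f j) (f k) = 0 := by
    intro x hp hq j k
    fin_cases j <;> fin_cases k <;> simp [hf] <;>
      linarith [diag x v1, diag x v2, diag x v3, diag x v4, c12 x, c23 x, c24 x,
        c34 x, hp, hq, hA x v1 v2, hA x v1 v3, hA x v1 v4, hA x v2 v3,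
        hA x v2 v4, hA x v3 v4]
  have hcomp : ∀ i j k : Fin 4, α (f i) (f j) (f k) = 0 := by
    intro i j k
    refine hall (f i) ?_ ?_ j k <;> fin_cases i <;> simp only [hf] <;> simp <;>
      first
        | exact hp1 | exact hq1 | exact hp2 | exact hq2 | exact hp3 | exact hq3
        | exact hp4 | exact hq4
  -- conclude
  refine B.ext fun i => ?_
  refine B.ext fun j => ?_
  refine B.ext fun k => ?_
  have : (⇑B : Fin 4 → V) = f := hBf
  rw [show B i = f i from by rw [hBf], show B j = f j from by rw [hBf],
    show B k = f k from by rw [hBf]]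
  simpa using hcomp i j k
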